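/- Let R be a ring. Let (C_i, d_i) and (B_i, d'_i), i ∈ ℕ, be two sequences of differential R-modules with chain maps κ_i : C_i → C_{i+1} and κ'_i : B_i → B_{i+1}, and telescopes (T_C, D) and (T_B, D'). Suppose given chain maps f_i : C_i → B_i (f_i ∘ d_i = d'_i ∘ f_i) and R-linear homotopies j_i : C_i → B_{i+1} satisfying f_{i+1} ∘ κ_i − κ'_i ∘ f_i = d'_{i+1} ∘ j_i + j_i ∘ d_i for all i. Define φ : T_C → T_B by φ(a, b) := (f(a) + ĵ(b), f(b)), where f acts componentwise and ĵ : ⊕_i C_i → ⊕_i B_i is defined by (ĵ b)_0 = 0 and (ĵ b)_{i+1} = j_i(b_i). Then φ is a chain map of telescopes: φ ∘ D = D' ∘ φ. -/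

import Mathlib

open DirectSum

section Telescope

variable {R : Type*} [Ring R]
variable (C : ℕ → Type*) [∀ i, AddCommGroup (C i)] [∀ i, Module R (C i)]

/-- Componentwise differential on the direct sum. -/
def dSum (d : ∀ i, C i →ₗ[R] C i) : (⨁ i, C i) →ₗ[R] ⨁ i, C i :=
  DirectSum.toModule R ℕ _ (fun i => (DirectSum.lof R ℕ C (i)).comp (d i))

/-- Shift map of the telescope: sends the summand `C i` to `C (i+1)` via `κ i`. -/
def shiftSum (κ : ∀ i, C i →ₗ[R] C (i + 1)) : (⨁ i, C i) →ₗ[R] ⨁ i, C i :=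
  DirectSum.toModule R ℕ _ (fun i => (DirectSum.lof R ℕ C (i + 1)).comp (κ i))

/-- The connecting map `c` of the telescope: `(c b)₀ = −b₀`,
`(c b)_{i+1} = κ_i (b_i) − b_{i+1}`. -/
def conn (κ : ∀ i, C i →ₗ[R] C (i + 1)) : (⨁ i, C i) →ₗ[R] ⨁ i, C i :=
  shiftSum C κ - LinearMap.id

/-- The telescope differential `D (a, b) = (d a + c b, −d b)`. -/
def Dtel (d : ∀ i, C i →ₗ[R] C i) (κ : ∀ i, C i →ₗ[R] C (i + 1)) :
    ((⨁ i, C i) × ⨁ i, C i) →ₗ[R] (⨁ i, C i) × ⨁ i, C i :=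
  LinearMap.prod
    ((dSum C d).comp (LinearMap.fst R _ _) + (conn C κ).comp (LinearMap.snd R _ _))
    (-(dSum C d).comp (LinearMap.snd R _ _))

variable (B : ℕ → Type*) [∀ i, AddCommGroup (B i)] [∀ i, Module R (B i)]

/-- The componentwise map `⊕ C i → ⊕ B i` induced by maps `f i : C i → B i`. -/
def fSum (f : ∀ i, C i →ₗ[R] B i) : (⨁ i, C i) →ₗ[R] ⨁ i, B i :=
  DirectSum.toModule R ℕ _ (fun i => (DirectSum.lof R ℕ B i).comp (f i))

/-- The map `ĵ : ⊕ C i → ⊕ B i` with `(ĵ b)₀ = 0` and `(ĵ b)_{i+1} = j_i (b_i)`. -/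
def jSum (j : ∀ i, C i →ₗ[R] B (i + 1)) : (⨁ i, C i) →ₗ[R] ⨁ i, B i :=
  DirectSum.toModule R ℕ _ (fun i => (DirectSum.lof R ℕ B (i + 1)).comp (j i))

/-- The telescope map `φ (a, b) = (f a + ĵ b, f b)`. -/
def phiTel (f : ∀ i, C i →ₗ[R] B i) (j : ∀ i, C i →ₗ[R] B (i + 1)) :
    ((⨁ i, C i) × ⨁ i, C i) →ₗ[R] (⨁ i, B i) × ⨁ i, B i :=
  LinearMap.prod
    ((fSum C B f).comp (LinearMap.fst R _ _) + (jSum C B j).comp (LinearMap.snd R _ _))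
    ((fSum C B f).comp (LinearMap.snd R _ _))

/-- Given two sequences of differential modules with chain maps
`κ_i : C_i → C_{i+1}`, `κ'_i : B_i → B_{i+1}`, chain maps `f_i : C_i → B_i` and homotopies
`j_i : C_i → B_{i+1}` with `f_{i+1} ∘ κ_i − κ'_i ∘ f_i = d'_{i+1} ∘ j_i + j_i ∘ d_i`, the
map `φ (a, b) = (f a + ĵ b, f b)` is a chain map of telescopes: `φ ∘ D = D' ∘ φ`. -/
theorem phiTel_chain_map
    (d : ∀ i, C i →ₗ[R] C i) (hd : ∀ i, (d i) ∘ₗ (d i) = 0)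
    (κ : ∀ i, C i →ₗ[R] C (i + 1))
    (hκ : ∀ i, (κ i) ∘ₗ (d i) = (d (i + 1)) ∘ₗ (κ i))
    (d' : ∀ i, B i →ₗ[R] B i) (hd' : ∀ i, (d' i) ∘ₗ (d' i) = 0)
    (κ' : ∀ i, B i →ₗ[R] B (i + 1))
    (hκ' : ∀ i, (κ' i) ∘ₗ (d' i) = (d' (i + 1)) ∘ₗ (κ' i))
    (f : ∀ i, C i →ₗ[R] B i)
    (hf : ∀ i, (f i) ∘ₗ (d i) = (d' i) ∘ₗ (f i))
    (j : ∀ i, C i →ₗ[R] B (i + 1))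
    (hj : ∀ i, (f (i + 1)) ∘ₗ (κ i) - (κ' i) ∘ₗ (f i) =
        (d' (i + 1)) ∘ₗ (j i) + (j i) ∘ₗ (d i)) :
    (phiTel C B f j) ∘ₗ (Dtel C d κ) = (Dtel B d' κ') ∘ₗ (phiTel C B f j) := by
  have hf' : ∀ i x, f i (d i x) = d' i (f i x) := fun i x => congrFun (congrArg DFunLike.coe (hf i)) x
  have hj' : ∀ i x, f (i+1) (κ i x) = d' (i+1) (j i x) + j i (d i x) + κ' i (f i x) := by
    intro i x
    have := congrFun (congrArg DFunLike.coe (hj i)) x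
    simp only [LinearMap.sub_apply, LinearMap.add_apply, LinearMap.comp_apply] at this
    rw [sub_eq_iff_eq_add] at this
    rw [this]
  refine LinearMap.prod_ext ?_ ?_ <;>
  · apply DirectSum.linearMap_ext
    intro i
    ext x
    all_goals simp only [LinearMap.comp_apply, LinearMap.inl_apply, LinearMap.inr_apply,
      phiTel, Dtel, dSum, conn, shiftSum, fSum, jSum, LinearMap.prod_apply,
      LinearMap.add_apply, LinearMap.sub_apply, LinearMap.neg_apply, LinearMap.fst_apply,
      LinearMap.snd_apply, LinearMap.id_apply, Function.prod, DirectSum.toModule_lof,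
      map_zero, map_add, map_sub, map_neg, add_zero, zero_add, neg_zero, hf', hj']
    all_goals abel

end Telescope
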